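/- Consider a Tree-PIN source on a tree G = ([m], E) (edge pairs (T_e, Y_e) mutually independent across edges, terminal variables X_k given by the incident edge components), with m ≥ 2. Then min_{λ∈Λ([m])} ( H(X_{[m]}) − Σ_{B∈Γ([m])} λ_B H(X_B | X_{B^c}) ) ≤ min_{e∈E} I(T_e ; Y_e). In particular, for each edge e the two-set weight vector assigning λ_{B_e} = λ_{B_e^c} = 1 (where B_e is one component of G with e removed) belongs to Λ([m]) and achieves the value H(X_{[m]}) − H(X_{B_e}|X_{B_e^c}) − H(X_{B_e^c}|X_{B_e}) = I(X_{B_e}; X_{B_e^c}) = I(T_e; Y_e). -/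

import Mathlib

open Finset

/-- Probability that the random variable `X : Ω → α` takes the value `a`,
for a probability mass function `p` on the finite sample space `Ω`. -/
noncomputable def probOf {Ω α : Type*} [Fintype Ω] [DecidableEq α]
    (p : Ω → ℝ) (X : Ω → α) (a : α) : ℝ :=
  ∑ ω ∈ Finset.univ.filter (fun ω => X ω = a), p ω

/-- Shannon entropy (in nats) of the random variable `X : Ω → α` under the
probability mass function `p`. -/
noncomputable def entropy {Ω α : Type*} [Fintype Ω] [Fintype α] [DecidableEq α]
    (p : Ω → ℝ) (X : Ω → α) : ℝ :=
  ∑ a : α, Real.negMulLog (probOf p X a)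

/-- Conditional Shannon entropy `H(X | Y) = H(X, Y) - H(Y)`. -/
noncomputable def condEntropy {Ω α β : Type*} [Fintype Ω]
    [Fintype α] [DecidableEq α] [Fintype β] [DecidableEq β]
    (p : Ω → ℝ) (X : Ω → α) (Y : Ω → β) : ℝ :=
  entropy p (fun ω => (X ω, Y ω)) - entropy p Y

/-- Mutual information `I(X ; Y) = H(X) + H(Y) - H(X, Y)`. -/
noncomputable def mutualInfo {Ω α β : Type*} [Fintype Ω]
    [Fintype α] [DecidableEq α] [Fintype β] [DecidableEq β]
    (p : Ω → ℝ) (X : Ω → α) (Y : Ω → β) : ℝ :=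
  entropy p X + entropy p Y - entropy p (fun ω => (X ω, Y ω))

/-- Conditional mutual information `I(X ; Y | Z) = H(X|Z) + H(Y|Z) - H(X,Y|Z)`. -/
noncomputable def condMutualInfo {Ω α β γ : Type*} [Fintype Ω]
    [Fintype α] [DecidableEq α] [Fintype β] [DecidableEq β]
    [Fintype γ] [DecidableEq γ]
    (p : Ω → ℝ) (X : Ω → α) (Y : Ω → β) (Z : Ω → γ) : ℝ :=
  condEntropy p X Z + condEntropy p Y Z - condEntropy p (fun ω => (X ω, Y ω)) Z

/-- The undirected simple graph on `[m]` underlying the directed edges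
`e ↦ (tl e, hd e)`. -/
def graphOf {m : ℕ} {ε : Type*} (tl hd : ε → Fin m) : SimpleGraph (Fin m) :=
  SimpleGraph.fromRel (fun i j => ∃ e, tl e = i ∧ hd e = j)

/-- In a Tree-PIN source on the tree with directed edges `e = (tl e, hd e)`, the
variable observed by terminal `k` is the tuple of the components `T_e` for edges `e`
leaving `k` together with the components `Y_e` for edges `e` entering `k`. -/
def termRV {Ω : Type*} {m : ℕ} {ε : Type*} (tl hd : ε → Fin m)
    {Tt Yt : ε → Type*} (Te : ∀ e, Ω → Tt e) (Ye : ∀ e, Ω → Yt e) (k : Fin m) :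
    Ω → ((∀ e : {e : ε // tl e = k}, Tt e.1) × (∀ e : {e : ε // hd e = k}, Yt e.1)) :=
  fun ω => (fun e => Te e.1 ω, fun e => Ye e.1 ω)

/-- The tuple `X_B = (X_k : k ∈ B)` of terminal variables of a Tree-PIN source. -/
def termTuple {Ω : Type*} {m : ℕ} {ε : Type*} (tl hd : ε → Fin m)
    {Tt Yt : ε → Type*} (Te : ∀ e, Ω → Tt e) (Ye : ∀ e, Ω → Yt e)
    (B : Finset (Fin m)) :
    Ω → (∀ k : B, ((∀ e : {e : ε // tl e = k.1}, Tt e.1) ×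
      (∀ e : {e : ε // hd e = k.1}, Yt e.1))) :=
  fun ω k => termRV tl hd Te Ye k.1 ω

/-- The edge pairs `(T_e, Y_e)` are mutually independent across edges. -/
def IndepEdgePairs {Ω : Type*} [Fintype Ω] {ε : Type*} [Fintype ε]
    {Tt Yt : ε → Type*} [∀ e, Fintype (Tt e)] [∀ e, DecidableEq (Tt e)]
    [∀ e, Fintype (Yt e)] [∀ e, DecidableEq (Yt e)]
    (p : Ω → ℝ) (Te : ∀ e, Ω → Tt e) (Ye : ∀ e, Ω → Yt e) : Prop :=
  ∀ x : ∀ e, Tt e × Yt e,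
    probOf p (fun ω e => (Te e ω, Ye e ω)) x
      = ∏ e : ε, probOf p (fun ω => (Te e ω, Ye e ω)) (x e)

/-- `Γ(A)`: the family of all nonempty proper subsets `B ⊊ [m]` with `A ⊄ B`. -/
def Gamma (m : ℕ) (A : Finset (Fin m)) : Finset (Finset (Fin m)) :=
  Finset.univ.filter (fun B => B.Nonempty ∧ B ≠ Finset.univ ∧ ¬ A ⊆ B)

/-- `λ ∈ Λ(A)`: a fractional partition, i.e. `0 ≤ λ_B ≤ 1` for every `B ∈ Γ(A)`
and `Σ_{B ∈ Γ(A) : j ∈ B} λ_B = 1` for every `j ∈ [m]`. -/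
def memLambda (m : ℕ) (A : Finset (Fin m)) (lam : Finset (Fin m) → ℝ) : Prop :=
  (∀ B ∈ Gamma m A, 0 ≤ lam B ∧ lam B ≤ 1) ∧
  ∀ j : Fin m, ∑ B ∈ (Gamma m A).filter (fun B => j ∈ B), lam B = 1


set_option maxHeartbeats 1000000
set_option synthInstance.maxHeartbeats 1000000

section aux
variable {Ω α β : Type*} [Fintype Ω] {p : Ω → ℝ}

lemma sum_probOf [Fintype α] [DecidableEq α] (hp1 : ∑ ω : Ω, p ω = 1) (X : Ω → α) :
    ∑ a : α, probOf p X a = 1 := by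
  rw [← hp1]; exact Finset.sum_fiberwise _ _ _

lemma probOf_comp [Fintype α] [DecidableEq α] [DecidableEq β] (X : Ω → α) (f : α → β) (b : β) :
    probOf p (fun ω => f (X ω)) b
      = ∑ a ∈ Finset.univ.filter (fun a => f a = b), probOf p X a := by
  unfold probOf
  rw [Finset.sum_fiberwise_eq_sum_filter Finset.univ (Finset.univ.filter fun a => f a = b) X p]
  congr 1
  ext ω
  simp

lemma probOf_comp_injective [DecidableEq α] [DecidableEq β] (X : Ω → α) {f : α → β}
    (hf : Function.Injective f) (a : α) :
    probOf p (fun ω => f (X ω)) (f a) = probOf p X a := by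
  unfold probOf; congr 1; ext ω; simp [hf.eq_iff]

lemma entropy_comp_injective [Fintype α] [DecidableEq α] [Fintype β] [DecidableEq β]
    (X : Ω → α) {f : α → β} (hf : Function.Injective f) :
    entropy p (fun ω => f (X ω)) = entropy p X := by
  unfold entropy
  rw [← Finset.sum_subset (Finset.subset_univ (Finset.univ.image f))]
  · rw [Finset.sum_image (fun a _ a' _ h => hf h)]
    exact Finset.sum_congr rfl fun a _ => by rw [probOf_comp_injective X hf]
  · intro b _ hb
    have h0 : probOf p (fun ω => f (X ω)) b = 0 := by
      unfold probOf
      have : Finset.univ.filter (fun ω => f (X ω) = b) = ∅ := by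
        ext ω
        simp only [Finset.mem_filter, Finset.mem_univ, true_and, Finset.notMem_empty, iff_false]
        intro h
        exact hb (Finset.mem_image.2 ⟨X ω, Finset.mem_univ _, h⟩)
      rw [this, Finset.sum_empty]
    rw [h0, Real.negMulLog_zero]

lemma probOf_const [Fintype α] [DecidableEq α] (hp1 : ∑ ω : Ω, p ω = 1) (c a : α) :
    probOf p (fun _ => c) a = if c = a then 1 else 0 := by
  unfold probOf
  by_cases h : c = a
  · simp [h, hp1]
  · simp [h]

lemma entropy_const [Fintype α] [DecidableEq α] (hp1 : ∑ ω : Ω, p ω = 1) (c : α) :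
    entropy p (fun _ => c) = 0 := by
  unfold entropy
  rw [Finset.sum_congr rfl fun a _ => by rw [probOf_const hp1]]
  simp [apply_ite Real.negMulLog]

lemma negMulLog_prod {ι : Type*} [DecidableEq ι] (s : Finset ι) (f : ι → ℝ) :
    Real.negMulLog (∏ i ∈ s, f i)
      = ∑ i ∈ s, (∏ j ∈ s.erase i, f j) * Real.negMulLog (f i) := by
  by_cases h : ∃ i ∈ s, f i = 0
  · obtain ⟨i0, hi0, hf0⟩ := h
    rw [Finset.prod_eq_zero hi0 hf0, Real.negMulLog_zero]
    symm; apply Finset.sum_eq_zero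
    intro i hi
    by_cases hii : i = i0
    · subst hii; rw [hf0, Real.negMulLog_zero, mul_zero]
    · rw [Finset.prod_eq_zero (Finset.mem_erase.2 ⟨fun h => hii h.symm, hi0⟩) hf0, zero_mul]
  · push_neg at h
    unfold Real.negMulLog
    rw [Real.log_prod h, Finset.mul_sum]
    refine Finset.sum_congr rfl fun i hi => ?_
    rw [← Finset.mul_prod_erase s f hi]
    ring
end aux

section pi
variable {Ω : Type*} [Fintype Ω] {p : Ω → ℝ}
variable {ι : Type*} [Fintype ι] [DecidableEq ι] {D : ι → Type*}
  [∀ i, Fintype (D i)] [∀ i, DecidableEq (D i)]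

lemma entropy_pi (hp1 : ∑ ω : Ω, p ω = 1) (X : ∀ i, Ω → D i)
    (h : ∀ x : ∀ i, D i, probOf p (fun ω i => X i ω) x = ∏ i, probOf p (X i) (x i)) :
    entropy p (fun ω i => X i ω) = ∑ i, entropy p (X i) := by
  unfold entropy
  calc ∑ x : ∀ i, D i, Real.negMulLog (probOf p (fun ω i => X i ω) x)
      = ∑ x : ∀ i, D i, ∑ i, (∏ j ∈ Finset.univ.erase i, probOf p (X j) (x j))
          * Real.negMulLog (probOf p (X i) (x i)) := by
        refine Finset.sum_congr rfl fun x _ => ?_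
        rw [h x, negMulLog_prod]
    _ = ∑ i, ∑ x : ∀ i, D i, (∏ j ∈ Finset.univ.erase i, probOf p (X j) (x j))
          * Real.negMulLog (probOf p (X i) (x i)) := Finset.sum_comm
    _ = ∑ i, ∑ a : D i, Real.negMulLog (probOf p (X i) a) := by
        refine Finset.sum_congr rfl fun i _ => ?_
        have key : ∀ x : ∀ j, D j,
            (∏ j ∈ Finset.univ.erase i, probOf p (X j) (x j))
              * Real.negMulLog (probOf p (X i) (x i))
            = ∏ j, (if j = i then Real.negMulLog (probOf p (X j) (x j))
                else probOf p (X j) (x j)) := by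
          intro x
          rw [← Finset.mul_prod_erase Finset.univ _ (Finset.mem_univ i), if_pos rfl, mul_comm]
          congr 1
          refine Finset.prod_congr rfl fun j hj => ?_
          rw [if_neg (Finset.mem_erase.1 hj).1]
        rw [Finset.sum_congr rfl fun x _ => key x]
        have := Finset.prod_univ_sum (fun j : ι => (Finset.univ : Finset (D j)))
          (fun j a => if j = i then Real.negMulLog (probOf p (X j) a) else probOf p (X j) a)
        rw [Fintype.piFinset_univ] at this
        rw [← this]
        rw [← Finset.mul_prod_erase Finset.univ _ (Finset.mem_univ i)]
        simp only [if_pos rfl]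
        have h1 : ∀ j ∈ Finset.univ.erase i,
            (∑ a : D j, if j = i then Real.negMulLog (probOf p (X j) a) else probOf p (X j) a)
              = 1 := by
          intro j hj
          rw [Finset.sum_congr rfl fun a _ => if_neg (Finset.mem_erase.1 hj).1]
          exact sum_probOf hp1 (X j)
        rw [Finset.prod_congr rfl h1, Finset.prod_const_one, mul_one]
        simp

lemma probOf_pi_map {E : ι → Type*} [∀ i, Fintype (E i)] [∀ i, DecidableEq (E i)]
    (X : ∀ i, Ω → D i) (g : ∀ i, D i → E i)
    (h : ∀ x : ∀ i, D i, probOf p (fun ω i => X i ω) x = ∏ i, probOf p (X i) (x i))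
    (y : ∀ i, E i) :
    probOf p (fun ω i => g i (X i ω)) y = ∏ i, probOf p (fun ω => g i (X i ω)) (y i) := by
  have hc : probOf p (fun ω i => g i (X i ω)) y
      = ∑ x ∈ Finset.univ.filter (fun x : ∀ i, D i => (fun i => g i (x i)) = y),
          probOf p (fun ω i => X i ω) x :=
    probOf_comp (fun ω i => X i ω) (fun x i => g i (x i)) y
  rw [hc]
  calc ∑ x ∈ Finset.univ.filter (fun x : ∀ i, D i => (fun i => g i (x i)) = y),
        probOf p (fun ω i => X i ω) x
      = ∑ x : ∀ i, D i, if (∀ i, g i (x i) = y i) then ∏ i, probOf p (X i) (x i) else 0 := by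
        rw [Finset.sum_filter]
        refine Finset.sum_congr rfl fun x _ => ?_
        rw [h x]
        congr 1
        simp [funext_iff]
    _ = ∑ x : ∀ i, D i, ∏ i, (if g i (x i) = y i then probOf p (X i) (x i) else 0) := by
        refine Finset.sum_congr rfl fun x _ => ?_
        rw [Finset.prod_ite_zero]
        simp
    _ = ∏ i, ∑ a : D i, (if g i a = y i then probOf p (X i) a else 0) := by
        have := Finset.prod_univ_sum (fun i : ι => (Finset.univ : Finset (D i)))
          (fun i a => if g i a = y i then probOf p (X i) a else 0)
        rw [Fintype.piFinset_univ] at this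
        rw [this]
    _ = ∏ i, probOf p (fun ω => g i (X i ω)) (y i) := by
        refine Finset.prod_congr rfl fun i _ => ?_
        rw [probOf_comp (X i) (g i) (y i), Finset.sum_filter]

end pi

section recon
variable {Ω : Type*} {m : ℕ} {ε : Type*} (tl hd : ε → Fin m) {Tt Yt : ε → Type*}

/-- Reconstruct the masked family of edge views from `X_B`. -/
def reconB (t0 : ∀ e, Tt e) (y0 : ∀ e, Yt e) (B : Finset (Fin m))
    (ξ : ∀ k : {x // x ∈ B}, ((∀ e : {e : ε // tl e = k.1}, Tt e.1) ×
      (∀ e : {e : ε // hd e = k.1}, Yt e.1)))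
    (f : ε) : Tt f × Yt f :=
  (if h : tl f ∈ B then (ξ ⟨tl f, h⟩).1 ⟨f, rfl⟩ else t0 f,
   if h : hd f ∈ B then (ξ ⟨hd f, h⟩).2 ⟨f, rfl⟩ else y0 f)

lemma reconB_injective (t0 : ∀ e, Tt e) (y0 : ∀ e, Yt e) (B : Finset (Fin m)) :
    Function.Injective (reconB tl hd t0 y0 B) := by
  intro ξ ξ' hh
  funext k
  refine Prod.ext ?_ ?_
  · funext e'
    obtain ⟨ev, hev⟩ := e'
    have hmem : tl ev ∈ B := by rw [hev]; exact k.2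
    have hk2 : (⟨tl ev, hmem⟩ : {x // x ∈ B}) = k := Subtype.ext hev
    subst hk2
    have h1 := congrArg Prod.fst (congrFun hh ev)
    simpa [reconB, dif_pos hmem] using h1
  · funext e'
    obtain ⟨ev, hev⟩ := e'
    have hmem : hd ev ∈ B := by rw [hev]; exact k.2
    have hk2 : (⟨hd ev, hmem⟩ : {x // x ∈ B}) = k := Subtype.ext hev
    subst hk2
    have h1 := congrArg Prod.snd (congrFun hh ev)
    simpa [reconB, dif_pos hmem] using h1

/-- Reconstruct the family of edge views from the pair `(X_B, X_{Bᶜ})`. -/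
def reconPair [DecidableEq (Fin m)] (B : Finset (Fin m))
    (ξη : (∀ k : {x // x ∈ B}, ((∀ e : {e : ε // tl e = k.1}, Tt e.1) ×
        (∀ e : {e : ε // hd e = k.1}, Yt e.1))) ×
      (∀ k : {x // x ∈ Bᶜ}, ((∀ e : {e : ε // tl e = k.1}, Tt e.1) ×
        (∀ e : {e : ε // hd e = k.1}, Yt e.1))))
    (f : ε) : Tt f × Yt f :=
  (if h : tl f ∈ B then (ξη.1 ⟨tl f, h⟩).1 ⟨f, rfl⟩
    else (ξη.2 ⟨tl f, Finset.mem_compl.2 h⟩).1 ⟨f, rfl⟩,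
   if h : hd f ∈ B then (ξη.1 ⟨hd f, h⟩).2 ⟨f, rfl⟩
    else (ξη.2 ⟨hd f, Finset.mem_compl.2 h⟩).2 ⟨f, rfl⟩)

lemma reconPair_injective [DecidableEq (Fin m)] (B : Finset (Fin m)) :
    Function.Injective (reconPair tl hd (Tt := Tt) (Yt := Yt) B) := by
  rintro ⟨ξ, η⟩ ⟨ξ', η'⟩ hh
  refine Prod.ext ?_ ?_
  · funext k
    refine Prod.ext ?_ ?_
    · funext e'
      obtain ⟨ev, hev⟩ := e'
      have hmem : tl ev ∈ B := by rw [hev]; exact k.2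
      have hk2 : (⟨tl ev, hmem⟩ : {x // x ∈ B}) = k := Subtype.ext hev
      subst hk2
      have h1 := congrArg Prod.fst (congrFun hh ev)
      simpa [reconPair, dif_pos hmem] using h1
    · funext e'
      obtain ⟨ev, hev⟩ := e'
      have hmem : hd ev ∈ B := by rw [hev]; exact k.2
      have hk2 : (⟨hd ev, hmem⟩ : {x // x ∈ B}) = k := Subtype.ext hev
      subst hk2
      have h1 := congrArg Prod.snd (congrFun hh ev)
      simpa [reconPair, dif_pos hmem] using h1
  · funext k
    refine Prod.ext ?_ ?_
    · funext e'
      obtain ⟨ev, hev⟩ := e'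
      have hmem : tl ev ∈ Bᶜ := by rw [hev]; exact k.2
      have hnot : tl ev ∉ B := Finset.mem_compl.1 hmem
      have hk2 : (⟨tl ev, hmem⟩ : {x // x ∈ Bᶜ}) = k := Subtype.ext hev
      subst hk2
      have h1 := congrArg Prod.fst (congrFun hh ev)
      simpa [reconPair, dif_neg hnot] using h1
    · funext e'
      obtain ⟨ev, hev⟩ := e'
      have hmem : hd ev ∈ Bᶜ := by rw [hev]; exact k.2
      have hnot : hd ev ∉ B := Finset.mem_compl.1 hmem
      have hk2 : (⟨hd ev, hmem⟩ : {x // x ∈ Bᶜ}) = k := Subtype.ext hev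
      subst hk2
      have h1 := congrArg Prod.snd (congrFun hh ev)
      simpa [reconPair, dif_neg hnot] using h1

/-- Reconstruct the family of edge views from the full tuple `X_{[m]}`. -/
def reconFull
    (ξ : ∀ k : Fin m, ((∀ e : {e : ε // tl e = k}, Tt e.1) ×
      (∀ e : {e : ε // hd e = k}, Yt e.1)))
    (f : ε) : Tt f × Yt f :=
  ((ξ (tl f)).1 ⟨f, rfl⟩, (ξ (hd f)).2 ⟨f, rfl⟩)

lemma reconFull_injective :
    Function.Injective (reconFull tl hd (Tt := Tt) (Yt := Yt)) := by
  intro ξ ξ' hh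
  funext k
  refine Prod.ext ?_ ?_
  · funext e'
    obtain ⟨ev, hev⟩ := e'
    subst hev
    exact congrArg Prod.fst (congrFun hh ev)
  · funext e'
    obtain ⟨ev, hev⟩ := e'
    subst hev
    exact congrArg Prod.snd (congrFun hh ev)

end recon

/-- Decidable equality for the pair of two terminal-tuple types (typeclass search
fails to find this composite on its own). -/
instance termPairDecEq {m : ℕ} {ε : Type*} [Fintype ε] [DecidableEq ε] (tl hd : ε → Fin m)
    {Tt Yt : ε → Type*} [∀ e, Fintype (Tt e)] [∀ e, DecidableEq (Tt e)]
    [∀ e, Fintype (Yt e)] [∀ e, DecidableEq (Yt e)] (B C : Finset (Fin m)) :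
    DecidableEq ((∀ k : {x // x ∈ B}, ((∀ e : {e : ε // tl e = k.1}, Tt e.1) ×
        (∀ e : {e : ε // hd e = k.1}, Yt e.1))) ×
      (∀ k : {x // x ∈ C}, ((∀ e : {e : ε // tl e = k.1}, Tt e.1) ×
        (∀ e : {e : ε // hd e = k.1}, Yt e.1)))) :=
  @instDecidableEqProd _ _ (by infer_instance) (by infer_instance)

section tupleEntropy
variable {Ω : Type*} [Fintype Ω] {m : ℕ} {ε : Type*} [Fintype ε] [DecidableEq ε]
  (tl hd : ε → Fin m) {Tt Yt : ε → Type*} [∀ e, Fintype (Tt e)] [∀ e, DecidableEq (Tt e)]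
  [∀ e, Fintype (Yt e)] [∀ e, DecidableEq (Yt e)]
  (p : Ω → ℝ) (Te : ∀ e, Ω → Tt e) (Ye : ∀ e, Ω → Yt e)

lemma entropy_termTuple (hp1 : ∑ ω : Ω, p ω = 1) (hindep : IndepEdgePairs p Te Ye)
    (ω₀ : Ω) (B : Finset (Fin m)) :
    entropy p (termTuple tl hd Te Ye B)
      = ∑ f : ε, entropy p (fun ω =>
          ((if tl f ∈ B then Te f ω else Te f ω₀,
            if hd f ∈ B then Ye f ω else Ye f ω₀) : Tt f × Yt f)) := by
  have hmask : ∀ y : ∀ f : ε, Tt f × Yt f,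
      probOf p (fun ω (f : ε) => ((if tl f ∈ B then Te f ω else Te f ω₀,
          if hd f ∈ B then Ye f ω else Ye f ω₀) : Tt f × Yt f)) y
        = ∏ f : ε, probOf p (fun ω => ((if tl f ∈ B then Te f ω else Te f ω₀,
            if hd f ∈ B then Ye f ω else Ye f ω₀) : Tt f × Yt f)) (y f) := by
    intro y
    exact probOf_pi_map (fun f ω => (Te f ω, Ye f ω))
      (fun f d => (if tl f ∈ B then d.1 else Te f ω₀, if hd f ∈ B then d.2 else Ye f ω₀))
      hindep y
  have h2 := entropy_pi hp1 _ hmask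
  have h3 : (fun ω => reconB tl hd (fun e => Te e ω₀) (fun e => Ye e ω₀) B
        (termTuple tl hd Te Ye B ω))
      = fun ω (f : ε) => ((if tl f ∈ B then Te f ω else Te f ω₀,
          if hd f ∈ B then Ye f ω else Ye f ω₀) : Tt f × Yt f) := by
    funext ω f
    refine Prod.ext ?_ ?_
    · by_cases h : tl f ∈ B
      · simp [reconB, dif_pos h, h, termTuple, termRV]
      · simp [reconB, dif_neg h, h]
    · by_cases h : hd f ∈ B
      · simp [reconB, dif_pos h, h, termTuple, termRV]
      · simp [reconB, dif_neg h, h]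
  calc entropy p (termTuple tl hd Te Ye B)
      = entropy p (fun ω => reconB tl hd (fun e => Te e ω₀) (fun e => Ye e ω₀) B
          (termTuple tl hd Te Ye B ω)) :=
        (entropy_comp_injective (termTuple tl hd Te Ye B)
          (reconB_injective tl hd (fun e => Te e ω₀) (fun e => Ye e ω₀) B)).symm
    _ = _ := by rw [h3]; exact h2

lemma entropy_edgeTuple (hp1 : ∑ ω : Ω, p ω = 1) (hindep : IndepEdgePairs p Te Ye) :
    entropy p (fun ω (f : ε) => ((Te f ω, Ye f ω) : Tt f × Yt f))
      = ∑ f : ε, entropy p (fun ω => ((Te f ω, Ye f ω) : Tt f × Yt f)) :=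
  entropy_pi hp1 (fun f ω => (Te f ω, Ye f ω)) hindep

lemma entropy_pair_termTuple (hp1 : ∑ ω : Ω, p ω = 1) (hindep : IndepEdgePairs p Te Ye)
    (B : Finset (Fin m)) :
    entropy p (fun ω => (termTuple tl hd Te Ye B ω, termTuple tl hd Te Ye Bᶜ ω))
      = ∑ f : ε, entropy p (fun ω => ((Te f ω, Ye f ω) : Tt f × Yt f)) := by
  have h3 : (fun ω => reconPair tl hd B
        (termTuple tl hd Te Ye B ω, termTuple tl hd Te Ye Bᶜ ω))
      = fun ω (f : ε) => ((Te f ω, Ye f ω) : Tt f × Yt f) := by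
    funext ω f
    refine Prod.ext ?_ ?_
    · by_cases h : tl f ∈ B
      · simp [reconPair, dif_pos h, termTuple, termRV]
      · simp [reconPair, dif_neg h, termTuple, termRV]
    · by_cases h : hd f ∈ B
      · simp [reconPair, dif_pos h, termTuple, termRV]
      · simp [reconPair, dif_neg h, termTuple, termRV]
  calc entropy p (fun ω => (termTuple tl hd Te Ye B ω, termTuple tl hd Te Ye Bᶜ ω))
      = entropy p (fun ω => reconPair tl hd B
          (termTuple tl hd Te Ye B ω, termTuple tl hd Te Ye Bᶜ ω)) :=
        (entropy_comp_injective (fun ω => (termTuple tl hd Te Ye B ω, termTuple tl hd Te Ye Bᶜ ω))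
          (reconPair_injective tl hd B)).symm
    _ = entropy p (fun ω (f : ε) => ((Te f ω, Ye f ω) : Tt f × Yt f)) := congrArg (entropy p) h3
    _ = _ := entropy_edgeTuple (Tt := Tt) (Yt := Yt) p Te Ye hp1 hindep

lemma entropy_full_termTuple (hp1 : ∑ ω : Ω, p ω = 1) (hindep : IndepEdgePairs p Te Ye) :
    entropy p (fun ω (k : Fin m) => termRV tl hd Te Ye k ω)
      = ∑ f : ε, entropy p (fun ω => ((Te f ω, Ye f ω) : Tt f × Yt f)) := by
  have h3 : (fun ω => reconFull tl hd (fun k => termRV tl hd Te Ye k ω))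
      = fun ω (f : ε) => ((Te f ω, Ye f ω) : Tt f × Yt f) := by
    funext ω f
    rfl
  calc entropy p (fun ω (k : Fin m) => termRV tl hd Te Ye k ω)
      = entropy p (fun ω => reconFull tl hd (fun k => termRV tl hd Te Ye k ω)) :=
        (entropy_comp_injective (fun ω (k : Fin m) => termRV tl hd Te Ye k ω)
          (reconFull_injective tl hd)).symm
    _ = entropy p (fun ω (f : ε) => ((Te f ω, Ye f ω) : Tt f × Yt f)) := congrArg (entropy p) h3
    _ = _ := entropy_edgeTuple (Tt := Tt) (Yt := Yt) p Te Ye hp1 hindep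

end tupleEntropy

section maskEntropy
variable {Ω α β : Type*} [Fintype Ω] {p : Ω → ℝ}

lemma entropy_pair_const_right [Fintype α] [DecidableEq α] [Fintype β] [DecidableEq β]
    (X : Ω → α) (c : β) :
    entropy p (fun ω => (X ω, c)) = entropy p X :=
  entropy_comp_injective X (f := fun a => (a, c)) (fun _ _ h => congrArg Prod.fst h)

lemma entropy_pair_const_left [Fintype α] [DecidableEq α] [Fintype β] [DecidableEq β]
    (Y : Ω → β) (c : α) :
    entropy p (fun ω => (c, Y ω)) = entropy p Y :=
  entropy_comp_injective Y (f := fun b => (c, b)) (fun _ _ h => congrArg Prod.snd h)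

end maskEntropy

section graph
variable {m : ℕ} {ε : Type*}

lemma sides_spec (tl hd : ε → Fin m) (htree : (graphOf tl hd).IsTree)
    (hloop : ∀ e, tl e ≠ hd e)
    (hinj : Function.Injective (fun e => s(tl e, hd e))) (e : ε)
    (B : Finset (Fin m))
    (hB : (∀ k, k ∈ B ↔
        ((graphOf tl hd).deleteEdges {s(tl e, hd e)}).Reachable (tl e) k) ∨
      (∀ k, k ∈ B ↔
        ((graphOf tl hd).deleteEdges {s(tl e, hd e)}).Reachable (hd e) k)) :
    ((tl e ∈ B ∧ hd e ∉ B) ∨ (tl e ∉ B ∧ hd e ∈ B)) ∧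
    ∀ f, f ≠ e → (tl f ∈ B ↔ hd f ∈ B) := by
  set G := graphOf tl hd with hG
  set D := G.deleteEdges {s(tl e, hd e)} with hD
  have hadj : G.Adj (tl e) (hd e) := by
    rw [hG, graphOf, SimpleGraph.fromRel_adj]
    exact ⟨hloop e, Or.inl ⟨e, rfl, rfl⟩⟩
  have hbridge : ¬ D.Reachable (tl e) (hd e) := by
    have hb := (SimpleGraph.isAcyclic_iff_forall_adj_isBridge.1 htree.IsAcyclic) hadj
    rw [SimpleGraph.isBridge_iff] at hb
    exact hb
  have hadjD : ∀ f, f ≠ e → D.Adj (tl f) (hd f) := by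
    intro f hf
    have hne : s(tl f, hd f) ≠ s(tl e, hd e) := fun h => hf (hinj h)
    rw [hD, SimpleGraph.deleteEdges_adj]
    constructor
    · rw [hG, graphOf, SimpleGraph.fromRel_adj]
      exact ⟨hloop f, Or.inl ⟨f, rfl, rfl⟩⟩
    · simpa using hne
  refine ⟨?_, ?_⟩
  · rcases hB with hB | hB
    · exact Or.inl ⟨(hB (tl e)).2 (SimpleGraph.Reachable.refl _),
        fun h => hbridge ((hB (hd e)).1 h)⟩
    · exact Or.inr ⟨fun h => hbridge (((hB (tl e)).1 h).symm),
        (hB (hd e)).2 (SimpleGraph.Reachable.refl _)⟩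
  · intro f hf
    rcases hB with hB | hB <;>
    · constructor
      · intro h
        rw [hB] at h ⊢
        exact h.trans (hadjD f hf).reachable
      · intro h
        rw [hB] at h ⊢
        exact h.trans (hadjD f hf).symm.reachable

lemma sides_total (tl hd : ε → Fin m) (htree : (graphOf tl hd).IsTree)
    (hloop : ∀ e, tl e ≠ hd e) (e : ε) (k : Fin m) :
    ((graphOf tl hd).deleteEdges {s(tl e, hd e)}).Reachable (tl e) k ∨
    ((graphOf tl hd).deleteEdges {s(tl e, hd e)}).Reachable (hd e) k := by
  set G := graphOf tl hd with hG
  set D := G.deleteEdges {s(tl e, hd e)} with hD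
  suffices h : ∀ (a b : Fin m) (_ : G.Walk a b),
      (D.Reachable (tl e) a ∨ D.Reachable (hd e) a) →
      (D.Reachable (tl e) b ∨ D.Reachable (hd e) b) by
    obtain ⟨w⟩ := htree.isConnected.preconnected (tl e) k
    exact h _ _ w (Or.inl (SimpleGraph.Reachable.refl _))
  intro a b w
  induction w with
  | nil => exact id
  | @cons u v c huv w ih =>
    intro h0
    apply ih
    by_cases hE : s(u, v) = s(tl e, hd e)
    · rw [Sym2.eq_iff] at hE
      rcases hE with ⟨h1, h2⟩ | ⟨h1, h2⟩
      · right; rw [h2]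
      · left; rw [h2]
    · have hDadj : D.Adj u v := by
        rw [hD, SimpleGraph.deleteEdges_adj]
        exact ⟨huv, by simpa using hE⟩
      rcases h0 with h | h
      · exact Or.inl (h.trans hDadj.reachable)
      · exact Or.inr (h.trans hDadj.reachable)

end graph
theorem treePIN_CN_expression_le_min_edge_mutualInfo
    {Ω : Type*} [Fintype Ω] {m : ℕ} {ε : Type*} [Fintype ε] [DecidableEq ε]
    [Nonempty ε]
    (tl hd : ε → Fin m)
    {Tt Yt : ε → Type*} [∀ e, Fintype (Tt e)] [∀ e, DecidableEq (Tt e)]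
    [∀ e, Fintype (Yt e)] [∀ e, DecidableEq (Yt e)]
    (p : Ω → ℝ) (hp : ∀ ω, 0 ≤ p ω) (hp1 : ∑ ω : Ω, p ω = 1)
    (Te : ∀ e, Ω → Tt e) (Ye : ∀ e, Ω → Yt e)
    (hm : 2 ≤ m)
    -- the underlying undirected graph is a tree with edge set `ε`
    (htree : (graphOf tl hd).IsTree)
    (hloop : ∀ e, tl e ≠ hd e)
    (hinj : Function.Injective (fun e => s(tl e, hd e)))
    -- the edge pairs are mutually independent across edges
    (hindep : IndepEdgePairs p Te Ye)
    (Be : ε → Finset (Fin m))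
    -- for every edge `e`, `B_e` is the vertex set of one of the two connected
    -- components of the tree with the edge `e` removed
    (hBe : ∀ e, (∀ k, k ∈ Be e ↔
        ((graphOf tl hd).deleteEdges {s(tl e, hd e)}).Reachable (tl e) k) ∨
      (∀ k, k ∈ Be e ↔
        ((graphOf tl hd).deleteEdges {s(tl e, hd e)}).Reachable (hd e) k)) :
    -- the two-set weight vector `λ_{B_e} = λ_{B_e^c} = 1` (and `0` elsewhere) belongs
    -- to `Λ([m])` and achieves the value
    -- `H(X_[m]) − H(X_{B_e}|X_{B_e^c}) − H(X_{B_e^c}|X_{B_e}) = I(X_{B_e};X_{B_e^c}) = I(T_e;Y_e)`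
    (∀ e : ε,
      memLambda m Finset.univ (fun B => if B = Be e ∨ B = (Be e)ᶜ then (1 : ℝ) else 0) ∧
      entropy p (fun ω (k : Fin m) => termRV tl hd Te Ye k ω)
          - ∑ B ∈ Gamma m Finset.univ,
              (if B = Be e ∨ B = (Be e)ᶜ then (1 : ℝ) else 0)
                * condEntropy p (termTuple tl hd Te Ye B) (termTuple tl hd Te Ye Bᶜ)
        = entropy p (fun ω (k : Fin m) => termRV tl hd Te Ye k ω)
          - condEntropy p (termTuple tl hd Te Ye (Be e)) (termTuple tl hd Te Ye (Be e)ᶜ)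
          - condEntropy p (termTuple tl hd Te Ye (Be e)ᶜ) (termTuple tl hd Te Ye (Be e)) ∧
      entropy p (fun ω (k : Fin m) => termRV tl hd Te Ye k ω)
          - condEntropy p (termTuple tl hd Te Ye (Be e)) (termTuple tl hd Te Ye (Be e)ᶜ)
          - condEntropy p (termTuple tl hd Te Ye (Be e)ᶜ) (termTuple tl hd Te Ye (Be e))
        = mutualInfo p (termTuple tl hd Te Ye (Be e)) (termTuple tl hd Te Ye (Be e)ᶜ) ∧
      mutualInfo p (termTuple tl hd Te Ye (Be e)) (termTuple tl hd Te Ye (Be e)ᶜ)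
        = mutualInfo p (Te e) (Ye e)) ∧
    -- hence `min_{λ ∈ Λ([m])} (H(X_[m]) − Σ_{B ∈ Γ([m])} λ_B H(X_B|X_{B^c}))
    --        ≤ min_{e ∈ E} I(T_e ; Y_e)`
    sInf {x : ℝ | ∃ lam : Finset (Fin m) → ℝ, memLambda m Finset.univ lam ∧
        x = entropy p (fun ω (k : Fin m) => termRV tl hd Te Ye k ω)
          - ∑ B ∈ Gamma m Finset.univ,
              lam B * condEntropy p (termTuple tl hd Te Ye B) (termTuple tl hd Te Ye Bᶜ)}
      ≤ ⨅ e : ε, mutualInfo p (Te e) (Ye e) := by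
  classical
  have hΩ : Nonempty Ω := by
    by_contra h
    rw [not_nonempty_iff] at h
    haveI := h
    rw [Finset.univ_eq_empty, Finset.sum_empty] at hp1
    norm_num at hp1
  obtain ⟨ω₀⟩ := hΩ
  have key : ∀ e : ε,
      memLambda m Finset.univ (fun B => if B = Be e ∨ B = (Be e)ᶜ then (1 : ℝ) else 0) ∧
      entropy p (fun ω (k : Fin m) => termRV tl hd Te Ye k ω)
          - ∑ B ∈ Gamma m Finset.univ,
              (if B = Be e ∨ B = (Be e)ᶜ then (1 : ℝ) else 0)
                * condEntropy p (termTuple tl hd Te Ye B) (termTuple tl hd Te Ye Bᶜ)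
        = entropy p (fun ω (k : Fin m) => termRV tl hd Te Ye k ω)
          - condEntropy p (termTuple tl hd Te Ye (Be e)) (termTuple tl hd Te Ye (Be e)ᶜ)
          - condEntropy p (termTuple tl hd Te Ye (Be e)ᶜ) (termTuple tl hd Te Ye (Be e)) ∧
      entropy p (fun ω (k : Fin m) => termRV tl hd Te Ye k ω)
          - condEntropy p (termTuple tl hd Te Ye (Be e)) (termTuple tl hd Te Ye (Be e)ᶜ)
          - condEntropy p (termTuple tl hd Te Ye (Be e)ᶜ) (termTuple tl hd Te Ye (Be e))
        = mutualInfo p (termTuple tl hd Te Ye (Be e)) (termTuple tl hd Te Ye (Be e)ᶜ) ∧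
      mutualInfo p (termTuple tl hd Te Ye (Be e)) (termTuple tl hd Te Ye (Be e)ᶜ)
        = mutualInfo p (Te e) (Ye e) := by
    intro e
    obtain ⟨hcross, hside⟩ := sides_spec tl hd htree hloop hinj e (Be e) (hBe e)
    obtain ⟨x, hx⟩ : ∃ x, x ∈ Be e := by
      rcases hcross with ⟨h1, _⟩ | ⟨_, h2⟩
      exacts [⟨_, h1⟩, ⟨_, h2⟩]
    obtain ⟨y, hy⟩ : ∃ y, y ∉ Be e := by
      rcases hcross with ⟨_, h2⟩ | ⟨h1, _⟩
      exacts [⟨_, h2⟩, ⟨_, h1⟩]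
    have hBmem : Be e ∈ Gamma m Finset.univ := by
      rw [Gamma, Finset.mem_filter]
      refine ⟨Finset.mem_univ _, ⟨x, hx⟩, ?_, ?_⟩
      · intro h; exact hy (h ▸ Finset.mem_univ y)
      · intro h; exact hy (h (Finset.mem_univ y))
    have hBcmem : (Be e)ᶜ ∈ Gamma m Finset.univ := by
      rw [Gamma, Finset.mem_filter]
      refine ⟨Finset.mem_univ _, ⟨y, Finset.mem_compl.2 hy⟩, ?_, ?_⟩
      · intro h
        have hxc : x ∈ (Be e)ᶜ := h ▸ Finset.mem_univ x
        exact (Finset.mem_compl.1 hxc) hx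
      · intro h
        exact (Finset.mem_compl.1 (h (Finset.mem_univ x))) hx
    have hBne : Be e ≠ (Be e)ᶜ := by
      intro h
      exact (Finset.mem_compl.1 (h ▸ hx)) hx
    have hlam : memLambda m Finset.univ
        (fun B => if B = Be e ∨ B = (Be e)ᶜ then (1 : ℝ) else 0) := by
      constructor
      · intro C _
        dsimp only
        split_ifs <;> norm_num
      · intro j
        by_cases hj : j ∈ Be e
        · have hrw : ∀ C ∈ (Gamma m Finset.univ).filter (fun C => j ∈ C),
              (if C = Be e ∨ C = (Be e)ᶜ then (1:ℝ) else 0) = if C = Be e then 1 else 0 := by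
            intro C hC
            rcases Finset.mem_filter.1 hC with ⟨-, hjC⟩
            by_cases h1 : C = Be e
            · rw [if_pos (Or.inl h1), if_pos h1]
            · have h2 : C ≠ (Be e)ᶜ := by
                intro h2
                rw [h2] at hjC
                exact (Finset.mem_compl.1 hjC) hj
              rw [if_neg (by tauto), if_neg h1]
          rw [Finset.sum_congr rfl hrw, Finset.sum_ite_eq']
          rw [if_pos (Finset.mem_filter.2 ⟨hBmem, hj⟩)]
        · have hj' : j ∈ (Be e)ᶜ := Finset.mem_compl.2 hj
          have hrw : ∀ C ∈ (Gamma m Finset.univ).filter (fun C => j ∈ C),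
              (if C = Be e ∨ C = (Be e)ᶜ then (1:ℝ) else 0)
                = if C = (Be e)ᶜ then 1 else 0 := by
            intro C hC
            rcases Finset.mem_filter.1 hC with ⟨-, hjC⟩
            by_cases h1 : C = (Be e)ᶜ
            · rw [if_pos (Or.inr h1), if_pos h1]
            · have h2 : C ≠ Be e := fun h2 => hj (h2 ▸ hjC)
              rw [if_neg (by tauto), if_neg h1]
          rw [Finset.sum_congr rfl hrw, Finset.sum_ite_eq']
          rw [if_pos (Finset.mem_filter.2 ⟨hBcmem, hj'⟩)]
    have HQ : ∀ C : Finset (Fin m),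
        entropy p (fun ω => (termTuple tl hd Te Ye C ω, termTuple tl hd Te Ye Cᶜ ω))
          = ∑ f : ε, entropy p (fun ω => ((Te f ω, Ye f ω) : Tt f × Yt f)) :=
      fun C => entropy_pair_termTuple tl hd p Te Ye hp1 hindep C
    have Hfull : entropy p (fun ω (k : Fin m) => termRV tl hd Te Ye k ω)
        = ∑ f : ε, entropy p (fun ω => ((Te f ω, Ye f ω) : Tt f × Yt f)) :=
      entropy_full_termTuple tl hd p Te Ye hp1 hindep
    have HB : ∀ C : Finset (Fin m), entropy p (termTuple tl hd Te Ye C)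
        = ∑ f : ε, entropy p (fun ω => ((if tl f ∈ C then Te f ω else Te f ω₀,
            if hd f ∈ C then Ye f ω else Ye f ω₀) : Tt f × Yt f)) :=
      fun C => entropy_termTuple tl hd p Te Ye hp1 hindep ω₀ C
    have Hswap : entropy p (fun ω =>
          (termTuple tl hd Te Ye (Be e)ᶜ ω, termTuple tl hd Te Ye (Be e) ω))
        = ∑ f : ε, entropy p (fun ω => ((Te f ω, Ye f ω) : Tt f × Yt f)) := by
      have h := HQ ((Be e)ᶜ)
      rwa [compl_compl] at h
    have hzero : ∀ f ∈ (Finset.univ : Finset ε), f ≠ e →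
        (entropy p (fun ω => ((if tl f ∈ Be e then Te f ω else Te f ω₀,
            if hd f ∈ Be e then Ye f ω else Ye f ω₀) : Tt f × Yt f))
          + entropy p (fun ω => ((if tl f ∈ (Be e)ᶜ then Te f ω else Te f ω₀,
            if hd f ∈ (Be e)ᶜ then Ye f ω else Ye f ω₀) : Tt f × Yt f))
          - entropy p (fun ω => ((Te f ω, Ye f ω) : Tt f × Yt f))) = 0 := by
      intro f _ hf
      by_cases htl : tl f ∈ Be e
      · have hhd : hd f ∈ Be e := (hside f hf).1 htl
        have htlc : tl f ∉ (Be e)ᶜ := fun h => (Finset.mem_compl.1 h) htl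
        have hhdc : hd f ∉ (Be e)ᶜ := fun h => (Finset.mem_compl.1 h) hhd
        simp only [if_pos htl, if_pos hhd, if_neg htlc, if_neg hhdc]
        rw [entropy_const hp1]
        ring
      · have hhd : hd f ∉ Be e := fun h => htl ((hside f hf).2 h)
        have htlc : tl f ∈ (Be e)ᶜ := Finset.mem_compl.2 htl
        have hhdc : hd f ∈ (Be e)ᶜ := Finset.mem_compl.2 hhd
        simp only [if_pos htlc, if_pos hhdc, if_neg htl, if_neg hhd]
        rw [entropy_const hp1]
        ring
    have hmain3 : mutualInfo p (termTuple tl hd Te Ye (Be e)) (termTuple tl hd Te Ye (Be e)ᶜ)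
        = mutualInfo p (Te e) (Ye e) := by
      unfold mutualInfo
      rw [HB (Be e), HB ((Be e)ᶜ), HQ (Be e)]
      rw [← Finset.sum_add_distrib, ← Finset.sum_sub_distrib]
      rw [Finset.sum_eq_single_of_mem e (Finset.mem_univ e) hzero]
      rcases hcross with ⟨h1, h2⟩ | ⟨h1, h2⟩
      · have h1c : tl e ∉ (Be e)ᶜ := fun h => (Finset.mem_compl.1 h) h1
        have h2c : hd e ∈ (Be e)ᶜ := Finset.mem_compl.2 h2
        simp only [if_pos h1, if_neg h2, if_neg h1c, if_pos h2c]
        rw [entropy_pair_const_right (p := p) (Te e) (Ye e ω₀),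
            entropy_pair_const_left (p := p) (Ye e) (Te e ω₀)]
      · have h1c : tl e ∈ (Be e)ᶜ := Finset.mem_compl.2 h1
        have h2c : hd e ∉ (Be e)ᶜ := fun h => (Finset.mem_compl.1 h) h2
        simp only [if_neg h1, if_pos h2, if_pos h1c, if_neg h2c]
        rw [entropy_pair_const_left (p := p) (Ye e) (Te e ω₀),
            entropy_pair_const_right (p := p) (Te e) (Ye e ω₀)]
        ring
    have hmain1 : (∑ C ∈ Gamma m Finset.univ,
          (if C = Be e ∨ C = (Be e)ᶜ then (1:ℝ) else 0)
            * condEntropy p (termTuple tl hd Te Ye C) (termTuple tl hd Te Ye Cᶜ))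
        = condEntropy p (termTuple tl hd Te Ye (Be e)) (termTuple tl hd Te Ye (Be e)ᶜ)
          + condEntropy p (termTuple tl hd Te Ye (Be e)ᶜ) (termTuple tl hd Te Ye (Be e)) := by
      have hterm : ∀ C ∈ Gamma m Finset.univ,
          (if C = Be e ∨ C = (Be e)ᶜ then (1:ℝ) else 0)
            * condEntropy p (termTuple tl hd Te Ye C) (termTuple tl hd Te Ye Cᶜ)
          = (if C = Be e then
                condEntropy p (termTuple tl hd Te Ye C) (termTuple tl hd Te Ye Cᶜ) else 0)
            + (if C = (Be e)ᶜ then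
                condEntropy p (termTuple tl hd Te Ye C) (termTuple tl hd Te Ye Cᶜ) else 0) := by
        intro C _
        by_cases h1 : C = Be e
        · rw [if_pos (Or.inl h1), if_pos h1, if_neg (by rw [h1]; exact hBne), one_mul, add_zero]
        · by_cases h2 : C = (Be e)ᶜ
          · rw [if_pos (Or.inr h2), if_neg h1, if_pos h2, one_mul, zero_add]
          · rw [if_neg (by tauto), if_neg h1, if_neg h2, zero_mul, add_zero]
      rw [Finset.sum_congr rfl hterm, Finset.sum_add_distrib,
        Finset.sum_ite_eq', Finset.sum_ite_eq', if_pos hBmem, if_pos hBcmem, compl_compl]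
    refine ⟨hlam, ?_, ?_, hmain3⟩
    · rw [hmain1]
      ring
    · unfold condEntropy mutualInfo
      rw [Hswap, Hfull, HQ (Be e)]
      ring
  refine ⟨key, ?_⟩
  have hbdd : BddBelow {x : ℝ | ∃ lam : Finset (Fin m) → ℝ, memLambda m Finset.univ lam ∧
      x = entropy p (fun ω (k : Fin m) => termRV tl hd Te Ye k ω)
        - ∑ B ∈ Gamma m Finset.univ,
            lam B * condEntropy p (termTuple tl hd Te Ye B) (termTuple tl hd Te Ye Bᶜ)} := by
    refine ⟨entropy p (fun ω (k : Fin m) => termRV tl hd Te Ye k ω)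
      - ∑ C ∈ Gamma m Finset.univ,
          |condEntropy p (termTuple tl hd Te Ye C) (termTuple tl hd Te Ye Cᶜ)|, ?_⟩
    rintro z ⟨lam, hmem, rfl⟩
    obtain ⟨hbound, -⟩ := hmem
    have hle : ∑ C ∈ Gamma m Finset.univ,
          lam C * condEntropy p (termTuple tl hd Te Ye C) (termTuple tl hd Te Ye Cᶜ)
        ≤ ∑ C ∈ Gamma m Finset.univ,
          |condEntropy p (termTuple tl hd Te Ye C) (termTuple tl hd Te Ye Cᶜ)| := by
      refine Finset.sum_le_sum fun C hC => ?_
      obtain ⟨h0, h1⟩ := hbound C hC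
      calc lam C * condEntropy p (termTuple tl hd Te Ye C) (termTuple tl hd Te Ye Cᶜ)
          ≤ |lam C * condEntropy p (termTuple tl hd Te Ye C) (termTuple tl hd Te Ye Cᶜ)| :=
            le_abs_self _
        _ = lam C * |condEntropy p (termTuple tl hd Te Ye C) (termTuple tl hd Te Ye Cᶜ)| := by
            rw [abs_mul, abs_of_nonneg h0]
        _ ≤ 1 * |condEntropy p (termTuple tl hd Te Ye C) (termTuple tl hd Te Ye Cᶜ)| :=
            mul_le_mul_of_nonneg_right h1 (abs_nonneg _)
        _ = |condEntropy p (termTuple tl hd Te Ye C) (termTuple tl hd Te Ye Cᶜ)| := one_mul _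
    exact sub_le_sub_left hle _
  refine le_ciInf fun e => ?_
  obtain ⟨hlam, hc1, hc2, hc3⟩ := key e
  have hxmem : (entropy p (fun ω (k : Fin m) => termRV tl hd Te Ye k ω)
        - condEntropy p (termTuple tl hd Te Ye (Be e)) (termTuple tl hd Te Ye (Be e)ᶜ)
        - condEntropy p (termTuple tl hd Te Ye (Be e)ᶜ) (termTuple tl hd Te Ye (Be e)))
      ∈ {x : ℝ | ∃ lam : Finset (Fin m) → ℝ, memLambda m Finset.univ lam ∧
        x = entropy p (fun ω (k : Fin m) => termRV tl hd Te Ye k ω)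
          - ∑ B ∈ Gamma m Finset.univ,
              lam B * condEntropy p (termTuple tl hd Te Ye B) (termTuple tl hd Te Ye Bᶜ)} :=
    ⟨_, hlam, hc1.symm⟩
  calc sInf {x : ℝ | ∃ lam : Finset (Fin m) → ℝ, memLambda m Finset.univ lam ∧
        x = entropy p (fun ω (k : Fin m) => termRV tl hd Te Ye k ω)
          - ∑ B ∈ Gamma m Finset.univ,
              lam B * condEntropy p (termTuple tl hd Te Ye B) (termTuple tl hd Te Ye Bᶜ)}
      ≤ entropy p (fun ω (k : Fin m) => termRV tl hd Te Ye k ω)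
        - condEntropy p (termTuple tl hd Te Ye (Be e)) (termTuple tl hd Te Ye (Be e)ᶜ)
        - condEntropy p (termTuple tl hd Te Ye (Be e)ᶜ) (termTuple tl hd Te Ye (Be e)) :=
        csInf_le hbdd hxmem
    _ = mutualInfo p (Te e) (Ye e) := by rw [hc2, hc3]
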